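/- Under consistency, positivity, and the tilting assumptions at both levels t = 0 and t = 1, the average causal effect ACE := E[Y(1)] − E[Y(0)] is identified as ACE = E[ μ_1(Y;X)·π_1(X) + ( μ_1(Y e^{γ_1 s_1(Y)};X)/μ_1(e^{γ_1 s_1(Y)};X) )·π_0(X) ] − E[ μ_0(Y;X)·π_0(X) + ( μ_0(Y e^{γ_0 s_0(Y)};X)/μ_0(e^{γ_0 s_0(Y)};X) )·π_1(X) ]. -/

import Mathlib

open MeasureTheory Real

theorem aux_tilt {Ω : Type*} {m m0 : MeasurableSpace Ω} (P : @Measure Ω m0)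
    [IsProbabilityMeasure P] (hm : m ≤ m0)
    (W E I J : Ω → ℝ)
    (hWI : Integrable (fun ω => W ω * I ω) P)
    (hWJ : Integrable (fun ω => W ω * J ω) P)
    (hIJ : ∀ᵐ ω ∂P, I ω + J ω = 1)
    (hBpos : ∀ᵐ ω ∂P, 0 < (P[(fun ω => E ω * I ω) | m]) ω)
    (htilt : ∀ᵐ ω ∂P,
      (P[(fun ω => W ω * J ω) | m]) ω * (P[(fun ω => E ω * I ω) | m]) ω =
      (P[(fun ω => W ω * E ω * I ω) | m]) ω * (P[J | m]) ω) :
    (∫ ω, ((P[(fun ω => W ω * I ω) | m]) ω +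
      ((P[(fun ω => W ω * E ω * I ω) | m]) ω / (P[(fun ω => E ω * I ω) | m]) ω) *
        (P[J | m]) ω) ∂P) = ∫ ω, W ω ∂P := by
  have h1 : (fun ω => (P[(fun ω => W ω * I ω) | m]) ω +
      ((P[(fun ω => W ω * E ω * I ω) | m]) ω / (P[(fun ω => E ω * I ω) | m]) ω) *
        (P[J | m]) ω) =ᵐ[P]
      fun ω => (P[(fun ω => W ω * I ω) | m]) ω + (P[(fun ω => W ω * J ω) | m]) ω := by
    filter_upwards [hBpos, htilt] with ω hB ht
    have hB' : (P[(fun ω => E ω * I ω) | m]) ω ≠ 0 := ne_of_gt hB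
    field_simp
    linarith [ht]
  have h2 : (fun ω => (P[(fun ω => W ω * I ω) | m]) ω + (P[(fun ω => W ω * J ω) | m]) ω)
      =ᵐ[P] P[W | m] := by
    have hadd := condExp_add (m := m) hWI hWJ
    have hc : (fun ω => W ω * I ω + W ω * J ω) =ᵐ[P] W := by
      filter_upwards [hIJ] with ω h
      rw [← mul_add, h, mul_one]
    have := condExp_congr_ae (m := m) (μ := P) hc
    filter_upwards [hadd, this] with ω h₁ h₂
    simp only [Pi.add_apply] at h₁
    rw [← h₂]; exact h₁.symm
  rw [integral_congr_ae (h1.trans h2), integral_condExp hm]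


/-- Under consistency, positivity, and the tilting assumptions at both levels
`t = 0` and `t = 1`, the average causal effect `ACE := E[Y(1)] − E[Y(0)]` is identified as
`ACE = E[μ₁(Y;X)pr₁(X) + (μ₁(Y e^{γ₁s₁(Y)};X)/μ₁(e^{γ₁s₁(Y)};X))pr₀(X)]
     − E[μ₀(Y;X)pr₀(X) + (μ₀(Y e^{γ₀s₀(Y)};X)/μ₀(e^{γ₀s₀(Y)};X))pr₁(X)]`. -/
theorem sensitivity_identification_ACE
    {Ω : Type*} [MeasurableSpace Ω] (P : Measure Ω) [IsProbabilityMeasure P]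
    {p : ℕ} (X : Ω → (Fin p → ℝ)) (T : Ω → ℝ) (Y : Ω → ℝ)
    -- potential outcomes `Yp 0 = Y(0)`, `Yp 1 = Y(1)`
    (Yp : Fin 2 → Ω → ℝ)
    (hX : Measurable X) (hT : Measurable T) (hY : Measurable Y)
    (hYp : ∀ t : Fin 2, Measurable (Yp t))
    (hTval : ∀ ω, T ω = 0 ∨ T ω = 1)
    -- consistency : `Y = Y(T)`
    (hcons : ∀ᵐ ω ∂P, Y ω = if T ω = 1 then Yp 1 ω else Yp 0 ω)
    -- tilting functions and sensitivity parameters at each level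
    (s : Fin 2 → ℝ → ℝ) (hs : ∀ t, Measurable (s t)) (γ : Fin 2 → ℝ)
    -- versions of the conditional treatment probabilities given `σ(X)`
    (pr : Fin 2 → (Fin p → ℝ) → ℝ) (hpr : ∀ t, Measurable (pr t))
    (hprv : ∀ t : Fin 2, (fun ω => pr t (X ω)) =ᵐ[P]
      P[(fun ω => if T ω = ((t : ℕ) : ℝ) then (1 : ℝ) else 0) |
        MeasurableSpace.comap X inferInstance])
    -- positivity
    (ε : ℝ) (hε : 0 < ε)
    (hpos : ∀ t : Fin 2, ∀ᵐ ω ∂P, ε ≤ pr t (X ω) ∧ pr t (X ω) ≤ 1 - ε)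
    -- integrability assumptions
    (hYpInt : ∀ t : Fin 2, Integrable (Yp t) P)
    (hExpInt : ∀ t : Fin 2, Integrable (fun ω => Real.exp (γ t * s t (Yp t ω))) P)
    (hYpExpInt : ∀ t : Fin 2, Integrable (fun ω => Yp t ω * Real.exp (γ t * s t (Yp t ω))) P)
    -- the tilted conditional expectations are a.s. positive
    (hCpos : ∀ t : Fin 2, ∀ᵐ ω ∂P, 0 <
      (P[(fun ω => Real.exp (γ t * s t (Yp t ω)) * (if T ω = ((t : ℕ) : ℝ) then (1 : ℝ) else 0)) |
        MeasurableSpace.comap X inferInstance]) ω)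
    -- tilting assumption at each level (for every bounded measurable `g`, and for `g = id`)
    (htilt : ∀ t : Fin 2, ∀ g : ℝ → ℝ, Measurable g → ((∃ C, ∀ y, |g y| ≤ C) ∨ g = id) →
      ∀ᵐ ω ∂P,
        (P[(fun ω => g (Yp t ω) * (if T ω = (((1 - t : Fin 2) : ℕ) : ℝ) then (1 : ℝ) else 0)) |
          MeasurableSpace.comap X inferInstance]) ω *
        (P[(fun ω => Real.exp (γ t * s t (Yp t ω)) *
            (if T ω = ((t : ℕ) : ℝ) then (1 : ℝ) else 0)) |
          MeasurableSpace.comap X inferInstance]) ω =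
        (P[(fun ω => g (Yp t ω) * Real.exp (γ t * s t (Yp t ω)) *
            (if T ω = ((t : ℕ) : ℝ) then (1 : ℝ) else 0)) |
          MeasurableSpace.comap X inferInstance]) ω *
        (P[(fun ω => if T ω = (((1 - t : Fin 2) : ℕ) : ℝ) then (1 : ℝ) else 0) |
          MeasurableSpace.comap X inferInstance]) ω)
    -- versions of the conditional means `μ_t(g(Y); X) = E[g(Y)1{T=t}|σ(X)]/π_t(X)`
    (muY muE muYE : Fin 2 → (Fin p → ℝ) → ℝ)
    (hmuY : ∀ t : Fin 2, (fun ω => muY t (X ω)) =ᵐ[P] fun ω =>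
      (P[(fun ω => Y ω * (if T ω = ((t : ℕ) : ℝ) then (1 : ℝ) else 0)) |
        MeasurableSpace.comap X inferInstance]) ω / pr t (X ω))
    (hmuE : ∀ t : Fin 2, (fun ω => muE t (X ω)) =ᵐ[P] fun ω =>
      (P[(fun ω => Real.exp (γ t * s t (Y ω)) * (if T ω = ((t : ℕ) : ℝ) then (1 : ℝ) else 0)) |
        MeasurableSpace.comap X inferInstance]) ω / pr t (X ω))
    (hmuYE : ∀ t : Fin 2, (fun ω => muYE t (X ω)) =ᵐ[P] fun ω =>
      (P[(fun ω => Y ω * Real.exp (γ t * s t (Y ω)) *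
          (if T ω = ((t : ℕ) : ℝ) then (1 : ℝ) else 0)) |
        MeasurableSpace.comap X inferInstance]) ω / pr t (X ω)) :
    (∫ ω, Yp 1 ω ∂P) - (∫ ω, Yp 0 ω ∂P) =
      (∫ ω, (muY 1 (X ω) * pr 1 (X ω) + (muYE 1 (X ω) / muE 1 (X ω)) * pr 0 (X ω)) ∂P) -
      (∫ ω, (muY 0 (X ω) * pr 0 (X ω) + (muYE 0 (X ω) / muE 0 (X ω)) * pr 1 (X ω)) ∂P) := by
  classical
  have hm : MeasurableSpace.comap X inferInstance ≤ ‹MeasurableSpace Ω› := hX.comap_le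
  have hI : ∀ c : ℝ, Measurable fun ω => if T ω = c then (1 : ℝ) else 0 := fun c =>
    Measurable.ite (hT (measurableSet_singleton c)) measurable_const measurable_const
  have key : ∀ t : Fin 2,
      (∫ ω, (muY t (X ω) * pr t (X ω) +
        (muYE t (X ω) / muE t (X ω)) * pr (1 - t) (X ω)) ∂P) = ∫ ω, Yp t ω ∂P := by
    intro t
    -- consistency on the event T = t
    have hYY : ∀ᵐ ω ∂P, T ω = ((t : ℕ) : ℝ) → Y ω = Yp t ω := by
      filter_upwards [hcons] with ω hω h
      fin_cases t
      · norm_num at h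
        rw [hω, if_neg (by rw [h]; norm_num)]
        rfl
      · norm_num at h
        rw [hω, if_pos h]
        rfl
    have hcY : (fun ω => Y ω * (if T ω = ((t : ℕ) : ℝ) then (1 : ℝ) else 0)) =ᵐ[P]
        (fun ω => Yp t ω * (if T ω = ((t : ℕ) : ℝ) then (1 : ℝ) else 0)) := by
      filter_upwards [hYY] with ω h
      by_cases hTt : T ω = ((t : ℕ) : ℝ)
      · rw [h hTt]
      · simp [hTt]
    have hcE : (fun ω => Real.exp (γ t * s t (Y ω)) * (if T ω = ((t : ℕ) : ℝ) then (1 : ℝ) else 0))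
        =ᵐ[P] (fun ω => Real.exp (γ t * s t (Yp t ω)) *
          (if T ω = ((t : ℕ) : ℝ) then (1 : ℝ) else 0)) := by
      filter_upwards [hYY] with ω h
      by_cases hTt : T ω = ((t : ℕ) : ℝ)
      · rw [h hTt]
      · simp [hTt]
    have hcYE : (fun ω => Y ω * Real.exp (γ t * s t (Y ω)) *
          (if T ω = ((t : ℕ) : ℝ) then (1 : ℝ) else 0)) =ᵐ[P]
        (fun ω => Yp t ω * Real.exp (γ t * s t (Yp t ω)) *
          (if T ω = ((t : ℕ) : ℝ) then (1 : ℝ) else 0)) := by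
      filter_upwards [hYY] with ω h
      by_cases hTt : T ω = ((t : ℕ) : ℝ)
      · rw [h hTt]
      · simp [hTt]
    -- integrability
    have hbound : ∀ (c : ℝ) x, ‖(if T x = c then (1 : ℝ) else 0)‖ ≤ 1 := by
      intro c x; by_cases h : T x = c <;> simp [h]
    have hWI : Integrable (fun ω => Yp t ω *
        (if T ω = ((t : ℕ) : ℝ) then (1 : ℝ) else 0)) P :=
      ((hYpInt t).bdd_mul (hI _).aestronglyMeasurable (Filter.Eventually.of_forall (hbound _))).congr
        (Filter.Eventually.of_forall fun ω => mul_comm _ _)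
    have hWJ : Integrable (fun ω => Yp t ω *
        (if T ω = (((1 - t : Fin 2) : ℕ) : ℝ) then (1 : ℝ) else 0)) P :=
      ((hYpInt t).bdd_mul (hI _).aestronglyMeasurable (Filter.Eventually.of_forall (hbound _))).congr
        (Filter.Eventually.of_forall fun ω => mul_comm _ _)
    have hIJ : ∀ᵐ ω ∂P, (if T ω = ((t : ℕ) : ℝ) then (1 : ℝ) else 0) +
        (if T ω = (((1 - t : Fin 2) : ℕ) : ℝ) then (1 : ℝ) else 0) = 1 := by
      refine Filter.Eventually.of_forall fun ω => ?_
      rcases hTval ω with h | h <;> fin_cases t <;> norm_num [h]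
    have htilt' := htilt t id measurable_id (Or.inr rfl)
    simp only [id_eq] at htilt'
    have base := aux_tilt P hm (Yp t) (fun ω => Real.exp (γ t * s t (Yp t ω)))
      (fun ω => if T ω = ((t : ℕ) : ℝ) then (1 : ℝ) else 0)
      (fun ω => if T ω = (((1 - t : Fin 2) : ℕ) : ℝ) then (1 : ℝ) else 0)
      hWI hWJ hIJ (hCpos t) htilt'
    rw [← base]
    refine integral_congr_ae ?_
    have hAc := condExp_congr_ae (m := MeasurableSpace.comap X inferInstance) (μ := P) hcY
    have hBc := condExp_congr_ae (m := MeasurableSpace.comap X inferInstance) (μ := P) hcE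
    have hCc := condExp_congr_ae (m := MeasurableSpace.comap X inferInstance) (μ := P) hcYE
    filter_upwards [hmuY t, hmuE t, hmuYE t, hprv (1 - t), hpos t, hCpos t,
      hAc, hBc, hCc] with ω h1 h2 h3 h4 h5 h6 h7 h8 h9
    have hprne : pr t (X ω) ≠ 0 := by linarith [h5.1]
    have hBne : (P[(fun ω => Real.exp (γ t * s t (Yp t ω)) *
        (if T ω = ((t : ℕ) : ℝ) then (1 : ℝ) else 0)) |
        MeasurableSpace.comap X inferInstance]) ω ≠ 0 := ne_of_gt h6
    rw [h1, h2, h3, h4, h7, h8, h9]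
    rw [div_mul_cancel₀ _ hprne]
    congr 1
    rw [div_div_eq_mul_div, div_mul_cancel₀ _ hprne]
  have k1 := key 1
  have k0 := key 0
  have e1 : (1 - (1 : Fin 2)) = 0 := by decide
  have e0 : (1 - (0 : Fin 2)) = 1 := by decide
  rw [e1] at k1
  rw [e0] at k0
  rw [← k1, ← k0]
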